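/- Let r > 0 and let μ and ν be finite Borel measures on the open interval (0,r). Suppose that for every bounded Borel function ρ : (0,r) → ℝ one has ∫_{(0,r)} ρ dμ = ∫_{(0,r)} N_r(ρ)(s) dν(s), where N_r(ρ)(s) := (log(r/s))^{−1} ∫_{(s,r)} ρ(t)·t^{−1} dt. Then for any 0 ≤ a < b ≤ r with μ((a,b)) = 0, one has ν((0,b)) = 0. -/

import Mathlib

open MeasureTheory Real Set

/-- Part (a) of the paper's Lemma on limit measures: if `μ` and `ν` are finite Borel
measures on `(0,r)` related by the Nevanlinna transform
`∫ ρ dμ = ∫ N_r(ρ)(s) dν(s)` for all bounded Borel `ρ`, and `μ` has no mass on `(a,b)`,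
then `ν` has no mass on `(0,b)`. -/
theorem stmt_3 (r : ℝ) (hr : 0 < r) (μ ν : Measure ℝ)
    [IsFiniteMeasure μ] [IsFiniteMeasure ν]
    (hμsupp : μ (Ioo (0:ℝ) r)ᶜ = 0) (hνsupp : ν (Ioo (0:ℝ) r)ᶜ = 0)
    (htrans : ∀ ρ : ℝ → ℝ, Measurable ρ → (∃ C : ℝ, ∀ x, |ρ x| ≤ C) →
      (∫ x, ρ x ∂μ) =
        ∫ s, ((Real.log (r / s))⁻¹ * ∫ t in Ioo s r, ρ t * t⁻¹) ∂ν)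
    (a b : ℝ) (ha : 0 ≤ a) (hab : a < b) (hbr : b ≤ r)
    (hμ0 : μ (Ioo a b) = 0) :
    ν (Ioo 0 b) = 0 := by
  set ρ : ℝ → ℝ := (Ioo a b).indicator 1 with hρ
  have hρmeas : Measurable ρ := (measurable_const.indicator measurableSet_Ioo)
  have hρbd : ∃ C : ℝ, ∀ x, |ρ x| ≤ C := by
    refine ⟨1, fun x => ?_⟩
    by_cases hx : x ∈ Ioo a b <;> simp [hρ, indicator, hx]
  have hLHS : (∫ x, ρ x ∂μ) = 0 := by
    rw [hρ, integral_indicator_one measurableSet_Ioo, measureReal_def, hμ0]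
    simp
  -- explicit formula for the inner integral
  have hinner : ∀ s ∈ Ioo (0:ℝ) r,
      (∫ t in Ioo s r, ρ t * t⁻¹) = log b - log (min (max s a) b) := by
    intro s hs
    have h1 : (∫ t in Ioo s r, ρ t * t⁻¹)
        = ∫ t in Ioo s r, (Ioo a b).indicator (fun t => t⁻¹) t := by
      refine integral_congr_ae (Filter.Eventually.of_forall fun t => ?_)
      by_cases ht : t ∈ Ioo a b <;> simp [hρ, indicator, ht]
    rw [h1, setIntegral_indicator measurableSet_Ioo, Ioo_inter_Ioo,
      min_eq_right hbr]
    have hc : 0 < s ⊔ a := lt_of_lt_of_le hs.1 le_sup_left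
    rcases le_or_gt (s ⊔ a) b with hcb | hcb
    · rw [min_eq_left hcb, ← integral_Ioc_eq_integral_Ioo,
        ← intervalIntegral.integral_of_le hcb, integral_inv_of_pos hc (hab.trans_le' ha),
        log_div (ne_of_gt (hab.trans_le' ha)) (ne_of_gt hc)]
    · rw [Ioo_eq_empty (not_lt.mpr hcb.le), min_eq_right hcb.le]
      simp
  -- the measurable explicit transform
  set h : ℝ → ℝ := fun s => (log (r / s))⁻¹ * (log b - log (min (max s a) b)) with hh
  have hb0 : (0:ℝ) < b := lt_of_le_of_lt ha hab
  have hhmeas : Measurable h := by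
    apply Measurable.mul
    · exact (measurable_const.div measurable_id).log.inv
    · exact measurable_const.sub (((measurable_id.max measurable_const).min
        measurable_const).log)
  have hhnonneg : ∀ s ∈ Ioo (0:ℝ) r, 0 ≤ h s := by
    intro s hs
    have h1 : (0:ℝ) ≤ (log (r / s))⁻¹ := by
      apply inv_nonneg.mpr
      apply log_nonneg
      rw [le_div_iff₀ hs.1]; linarith [hs.2]
    have h2 : log (min (max s a) b) ≤ log b := by
      apply log_le_log (lt_min (lt_of_lt_of_le hs.1 le_sup_left) hb0) (min_le_right _ _)
    exact mul_nonneg h1 (by linarith)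
  have hhbd : ∀ s ∈ Ioo (0:ℝ) r, h s ≤ 1 := by
    intro s hs
    rcases le_or_gt b (s ⊔ a) with hcb | hcb
    · have : min (s ⊔ a) b = b := min_eq_right hcb
      rw [hh]; simp only [this, sub_self, mul_zero]; norm_num
    · have hmin : min (s ⊔ a) b = s ⊔ a := min_eq_left hcb.le
      have hc : 0 < s ⊔ a := lt_of_lt_of_le hs.1 le_sup_left
      have hlog1 : log b - log (s ⊔ a) ≤ log r - log s := by
        have : log b ≤ log r := log_le_log hb0 hbr
        have : log s ≤ log (s ⊔ a) := log_le_log hs.1 le_sup_left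
        linarith [log_le_log hb0 hbr]
      have hrs : log (r / s) = log r - log s := log_div (ne_of_gt hr) (ne_of_gt hs.1)
      rcases le_or_gt (log r - log s) 0 with hL | hL
      ·
        exfalso
        have : log s < log r := log_lt_log hs.1 hs.2
        linarith
      · rw [hh]
        simp only [hmin, hrs]
        rw [inv_mul_le_iff₀ hL]
        linarith
  -- the integrand in the transform equals h a.e. w.r.t. ν
  have hae : ∀ᵐ s ∂ν, s ∈ Ioo (0:ℝ) r := by
    rw [ae_iff]
    exact measure_mono_null (fun x hx => by simpa using hx) hνsupp
  have hcongr : (fun s => (log (r / s))⁻¹ * ∫ t in Ioo s r, ρ t * t⁻¹) =ᵐ[ν] h := by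
    filter_upwards [hae] with s hs
    rw [hinner s hs]
  have hint0 : (∫ s, h s ∂ν) = 0 := by
    rw [← integral_congr_ae hcongr, ← htrans ρ hρmeas hρbd, hLHS]
  have hhint : Integrable h ν := by
    refine Integrable.mono' (integrable_const 1) hhmeas.aestronglyMeasurable ?_
    filter_upwards [hae] with s hs
    rw [Real.norm_eq_abs, abs_of_nonneg (hhnonneg s hs)]
    exact hhbd s hs
  have hzero : h =ᵐ[ν] 0 := by
    rw [← integral_eq_zero_iff_of_nonneg_ae ?_ hhint]
    · exact hint0
    · filter_upwards [hae] with s hs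
      exact hhnonneg s hs
  -- positivity of h on (0, b)
  have hpos : ∀ s ∈ Ioo (0:ℝ) b, 0 < h s := by
    intro s hs
    have hsr : s < r := lt_of_lt_of_le hs.2 hbr
    have h1 : 0 < (log (r / s))⁻¹ := by
      apply inv_pos.mpr
      apply log_pos
      rw [lt_div_iff₀ hs.1]; linarith
    have hc : 0 < s ⊔ a := lt_of_lt_of_le hs.1 le_sup_left
    have hcb : s ⊔ a < b := sup_lt_iff.mpr ⟨hs.2, hab⟩
    have h2 : log (min (s ⊔ a) b) < log b := by
      rw [min_eq_left hcb.le]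
      exact log_lt_log hc hcb
    exact mul_pos h1 (by linarith)
  -- conclude
  have : Ioo (0:ℝ) b ⊆ {s | h s ≠ 0} := fun s hs => ne_of_gt (hpos s hs)
  refine measure_mono_null this ?_
  have := hzero
  rw [Filter.EventuallyEq, ae_iff] at this
  simpa using this
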